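/- For n ≥ 1 and 0 ≤ i ≤ n−1, the isoplex ∇̄_i[n] = W_i(Δ[n−1]) is isomorphic to the nerve of the category [n]_i obtained from the linearly ordered category [n] = {0 ≤ 1 ≤ … ≤ n} by freely inverting the morphism i → i+1; equivalently, [n]_i is the pushout in the category of small categories of [n] ← [1] → 𝕀, where [1] → [n] picks out the morphism i → i+1 and [1] → 𝕀 is the inclusion into the free-living isomorphism. -/

import Mathlib

open CategoryTheory Simplicial Opposite Limits

namespace Paper

/-! ## The simplicial set `J`, nerve of the free-living isomorphism -/

/-- The simplicial set `J`, the nerve of the free-living isomorphism `𝕀`: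
its `n`-simplices are the tuples `{0,1}^(n+1)` (recorded as `Bool`-valued functions,
`false` being the vertex `0` and `true` the vertex `1`), with all simplicial
operators acting by reindexing. -/
def J : SSet.{0} where
  obj m := Fin (m.unop.len + 1) → Bool
  map f := TypeCat.ofHom fun a => a ∘ f.unop.toOrderHom
  map_id _ := rfl
  map_comp _ _ := rfl

/-- The two vertices `0, 1 : Δ[0] ⟶ J` of `J`; `ptJ false` is the vertex `0` and
`ptJ true` is the vertex `1`. -/
def ptJ (b : Bool) : Δ[0] ⟶ J where
  app _ := TypeCat.ofHom fun _ => fun _ => b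
  naturality _ _ _ := rfl

/-- The boundary `∂J = {0} ∪ {1}` of `J` (two discrete points). -/
def bJ : SSet.{0} where
  obj _ := Bool
  map _ := TypeCat.ofHom fun b => b
  map_id _ := rfl
  map_comp _ _ := rfl

/-- The inclusion `∂J ↪ J`. -/
def bJIncl : bJ ⟶ J where
  app _ := TypeCat.ofHom fun b => fun _ => b
  naturality _ _ _ := rfl

/-! ## Binary products and pushout-products -/

/-- The (pointwise) product of two simplicial sets. -/
def sprod (X Y : SSet.{0}) : SSet.{0} where
  obj m := X.obj m × Y.obj m
  map f := TypeCat.ofHom fun p => (X.map f p.1, Y.map f p.2)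
  map_id m := by
    ext p
    · exact FunctorToTypes.map_id_apply X p.1
    · exact FunctorToTypes.map_id_apply Y p.2
  map_comp f g := by
    ext p
    · exact FunctorToTypes.map_comp_apply X f g p.1
    · exact FunctorToTypes.map_comp_apply Y f g p.2

/-- The product of two morphisms of simplicial sets. -/
def sprodMap {X X' Y Y' : SSet.{0}} (f : X ⟶ X') (g : Y ⟶ Y') : sprod X Y ⟶ sprod X' Y' where
  app m := TypeCat.ofHom fun p => (f.app m p.1, g.app m p.2)
  naturality m m' φ := by
    ext p
    apply Prod.ext
    · exact NatTrans.naturality_apply f φ p.1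
    · exact NatTrans.naturality_apply g φ p.2

/-- The pushout-product `f □ g : (A × Z) ∪ (B × W) ⟶ B × Z` of `f : A ⟶ B` and
`g : W ⟶ Z`, the domain being presented as the pushout `(A × Z) ∪_{A × W} (B × W)`. -/
noncomputable def pp {A B W Z : SSet.{0}} (f : A ⟶ B) (g : W ⟶ Z) :
    pushout (sprodMap (𝟙 A) g) (sprodMap f (𝟙 W)) ⟶ sprod B Z :=
  pushout.desc (sprodMap f (𝟙 Z)) (sprodMap (𝟙 B) g) rfl

/-! ## Saturated classes of morphisms -/

/-- A class of morphisms is stable under retracts if, whenever `f` is a retract of `g`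
in the arrow category, membership of `g` implies membership of `f`. -/
def StableUnderRetracts (T : MorphismProperty SSet.{0}) : Prop :=
  ∀ ⦃X Y X' Y' : SSet.{0}⦄ (f : X ⟶ Y) (g : X' ⟶ Y')
    (i : Arrow.mk f ⟶ Arrow.mk g) (r : Arrow.mk g ⟶ Arrow.mk f),
    i ≫ r = 𝟙 _ → T g → T f

/-- The inclusion functor `Set.Iio i ⥤ ι`. -/
def iioFunctor {ι : Type} [Preorder ι] (i : ι) : Set.Iio i ⥤ ι :=
  Monotone.functor (f := Subtype.val) (fun _ _ h => h)

/-- The cocone on the restriction of `F : ι ⥤ SSet` to `Set.Iio i` with apex `F.obj i`. -/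
def restrictionCocone {ι : Type} [Preorder ι] (F : ι ⥤ SSet.{0}) (i : ι) :
    Cocone (iioFunctor i ⋙ F) where
  pt := F.obj i
  ι :=
    { app := fun j => F.map (homOfLE j.2.le)
      naturality := fun j k h => by
        dsimp [iioFunctor]
        rw [← F.map_comp, Category.comp_id]
        congr 1 }

/-- A class of morphisms is stable under transfinite composition if, for every
well-ordered type `ι` and every functor `F : ι ⥤ SSet` which is continuous at limit
stages and whose successor maps `F.obj i ⟶ F.obj (i+1)` all belong to the class, and
every colimit cocone `c` on `F`, the transfinite composite `F.obj ⊥ ⟶ c.pt` belongs to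
the class. -/
def StableUnderTransfiniteComposition (T : MorphismProperty SSet.{0}) : Prop :=
  ∀ (ι : Type) [LinearOrder ι] [SuccOrder ι] [OrderBot ι] [WellFoundedLT ι]
    (F : ι ⥤ SSet.{0}),
    (∀ i : ι, ¬IsMax i → T (F.map (homOfLE (Order.le_succ i)))) →
    (∀ i : ι, Order.IsSuccLimit i → Nonempty (IsColimit (restrictionCocone F i))) →
    ∀ (c : Cocone F), IsColimit c → T (c.ι.app ⊥)

/-- A class of morphisms of simplicial sets is saturated if it is closed under
isomorphisms, pushouts, transfinite compositions, and retracts. -/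
structure IsSaturated (T : MorphismProperty SSet.{0}) : Prop where
  respectsIso : T.RespectsIso
  stableUnderCobaseChange : T.IsStableUnderCobaseChange
  stableUnderRetracts : StableUnderRetracts T
  stableUnderTransfiniteComposition : StableUnderTransfiniteComposition T

/-- The saturated closure of a class of morphisms: the smallest saturated class
containing it. -/
def satClosure (S : MorphismProperty SSet.{0}) : MorphismProperty SSet.{0} :=
  fun _ _ f => ∀ T : MorphismProperty SSet.{0}, IsSaturated T → S ≤ T → T f

/-! ## Subcomplexes -/

/-- A subcomplex of a simplicial set. -/
structure Sub (X : SSet.{0}) where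
  carrier : ∀ m, Set (X.obj m)
  map_mem : ∀ ⦃m m' : SimplexCategoryᵒᵖ⦄ (f : m ⟶ m') ⦃σ : X.obj m⦄,
    σ ∈ carrier m → X.map f σ ∈ carrier m'

/-- The simplicial set underlying a subcomplex. -/
def Sub.toSSet {X : SSet.{0}} (S : Sub X) : SSet.{0} where
  obj m := S.carrier m
  map f := TypeCat.ofHom fun σ => ⟨X.map f σ.1, S.map_mem f σ.2⟩
  map_id m := by
    ext σ
    exact FunctorToTypes.map_id_apply X σ.1
  map_comp f g := by
    ext σ
    exact FunctorToTypes.map_comp_apply X f g σ.1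

/-- The inclusion of a subcomplex. -/
def Sub.ι {X : SSet.{0}} (S : Sub X) : S.toSSet ⟶ X where
  app _ := TypeCat.ofHom fun σ => σ.1
  naturality _ _ _ := rfl

/-- Containment of subcomplexes. -/
def Sub.Le {X : SSet.{0}} (S T : Sub X) : Prop := ∀ m, S.carrier m ⊆ T.carrier m

/-- The inclusion map associated to a containment of subcomplexes. -/
def Sub.homOfLe {X : SSet.{0}} {S T : Sub X} (h : S.Le T) : S.toSSet ⟶ T.toSSet where
  app m := TypeCat.ofHom fun σ => ⟨σ.1, h m σ.2⟩
  naturality _ _ _ := rfl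

/-- The union of two subcomplexes. -/
def Sub.union {X : SSet.{0}} (S T : Sub X) : Sub X where
  carrier m := S.carrier m ∪ T.carrier m
  map_mem _ _ f _ h := h.imp (fun hs => S.map_mem f hs) (fun ht => T.map_mem f ht)

/-- The intersection of two subcomplexes. -/
def Sub.inter {X : SSet.{0}} (S T : Sub X) : Sub X where
  carrier m := S.carrier m ∩ T.carrier m
  map_mem _ _ f _ h := ⟨S.map_mem f h.1, T.map_mem f h.2⟩

/-- A subcomplex `S` of `X`, viewed as a subcomplex of (the simplicial set underlying)
another subcomplex `T` of `X`. -/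
def Sub.restrict {X : SSet.{0}} (T S : Sub X) : Sub T.toSSet where
  carrier m := {σ | σ.1 ∈ S.carrier m}
  map_mem _ _ f _ h := S.map_mem f h

/-- The (dimension zero) object of `SimplexCategoryᵒᵖ` indexing vertices. -/
abbrev V0 : SimplexCategoryᵒᵖ := Opposite.op (SimplexCategory.mk 0)

/-- The full subcomplex of `X` on a set `ν` of vertices: the simplices all of whose
vertices lie in `ν`. -/
def fullSub (X : SSet.{0}) (ν : Set (X.obj V0)) : Sub X where
  carrier m := {σ | ∀ g : SimplexCategory.mk 0 ⟶ m.unop, X.map g.op σ ∈ ν}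
  map_mem := by
    intro m m' f σ hσ g
    rw [← FunctorToTypes.map_comp_apply]
    exact hσ (g ≫ f.unop)

/-! ## Widenings and widened inclusions -/

/-- The widening `W_ν(X)` of `X` at a set `ν` of vertices: the full subcomplex of
`J × X` on the vertex set `({0} × X₀) ∪ ({1} × ν)`. -/
def wideSub (X : SSet.{0}) (ν : Set (X.obj V0)) : Sub (sprod J X) :=
  fullSub (sprod J X) {p | p.1 0 = true → p.2 ∈ ν}

/-- The subcomplex `{0} × X` of `J × X` (the full subcomplex on the vertices
`{0} × X₀`). -/
def zeroSlice (X : SSet.{0}) : Sub (sprod J X) :=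
  fullSub (sprod J X) {p | p.1 0 = false}

/-- For `A` a subcomplex of `Y`, the subcomplex `J × A` of `J × Y`. -/
def Sub.prodJ {Y : SSet.{0}} (A : Sub Y) : Sub (sprod J Y) where
  carrier m := {p | p.2 ∈ A.carrier m}
  map_mem _ _ f _ h := A.map_mem f h

/-- Given a subcomplex (inclusion) `A = X ⊆ Y` and a set `ν` of vertices of `Y`, the
subcomplex `({0} × Y) ∪ W_{ν ∩ X₀}(X)` of `J × Y`: the domain of the inclusion
`X ↪ Y` widened at `ν`. -/
def widenedSub (Y : SSet.{0}) (A : Sub Y) (ν : Set (Y.obj V0)) : Sub (sprod J Y) :=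
  (zeroSlice Y).union ((wideSub Y (ν ∩ A.carrier V0)).inter A.prodJ)

lemma zeroSlice_le_wideSub (Y : SSet.{0}) (ν : Set (Y.obj V0)) :
    (zeroSlice Y).Le (wideSub Y ν) := by
  intro m σ hσ g h
  exact absurd (hσ g) (by simp [h])

lemma wideSub_mono (Y : SSet.{0}) {ν ν' : Set (Y.obj V0)} (h : ν ⊆ ν') :
    (wideSub Y ν).Le (wideSub Y ν') :=
  fun _ σ hσ g ht => h (hσ g ht)

lemma widenedSub_le (Y : SSet.{0}) (A : Sub Y) (ν : Set (Y.obj V0)) :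
    (widenedSub Y A ν).Le (wideSub Y ν) := by
  refine fun m σ hσ => Or.elim hσ (fun h => ?_) (fun h => ?_)
  · exact zeroSlice_le_wideSub Y ν m h
  · exact wideSub_mono Y Set.inter_subset_left m h.1

/-- The inclusion `X ↪ Y` widened at `ν`: the inclusion
`({0} × Y) ∪ W_{ν ∩ X₀}(X) ↪ W_ν(Y)`. -/
def widenedIncl (Y : SSet.{0}) (A : Sub Y) (ν : Set (Y.obj V0)) :
    (widenedSub Y A ν).toSSet ⟶ (wideSub Y ν).toSSet :=
  Sub.homOfLe (widenedSub_le Y A ν)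

/-- `Wide`: the class of all widened inclusions. -/
def Wide : MorphismProperty SSet.{0} := fun _ _ h =>
  ∃ (Y : SSet.{0}) (A : Sub Y) (ν : Set (Y.obj V0)),
    Arrow.mk h = Arrow.mk (widenedIncl Y A ν)

/-- `Wide^(1)`: the class of inclusions widened at a single vertex. -/
def Wide1 : MorphismProperty SSet.{0} := fun _ _ h =>
  ∃ (Y : SSet.{0}) (A : Sub Y) (v : Y.obj V0),
    Arrow.mk h = Arrow.mk (widenedIncl Y A {v})

/-! ## Narrow vertices -/

/-- A vertex `v` of `Y` is narrow if every simplex of `Y` has at most one vertex equal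
to `v`. -/
def Narrow (Y : SSet.{0}) (v : Y.obj V0) : Prop :=
  ∀ ⦃m : SimplexCategoryᵒᵖ⦄ (σ : Y.obj m) (g g' : SimplexCategory.mk 0 ⟶ m.unop),
    Y.map g.op σ = v → Y.map g'.op σ = v → g = g'

/-- `Wide_nar`: the class of inclusions widened at a narrow set of vertices. -/
def WideNar : MorphismProperty SSet.{0} := fun _ _ h =>
  ∃ (Y : SSet.{0}) (A : Sub Y) (ν : Set (Y.obj V0)),
    (∀ v ∈ ν, Narrow Y v) ∧ Arrow.mk h = Arrow.mk (widenedIncl Y A ν)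

/-- `Wide_nar^(1)`: the class of inclusions widened at a single narrow vertex. -/
def WideNar1 : MorphismProperty SSet.{0} := fun _ _ h =>
  ∃ (Y : SSet.{0}) (A : Sub Y) (v : Y.obj V0),
    Narrow Y v ∧ Arrow.mk h = Arrow.mk (widenedIncl Y A {v})

/-! ## Standard simplices, boundaries, skeleta, iso-horns -/

/-- The unique map to the terminal simplicial set `Δ[0]`. -/
def toPt (X : SSet.{0}) : X ⟶ Δ[0] where
  app m := TypeCat.ofHom fun _ => SSet.stdSimplex.const 0 0 m
  naturality m m' f := by
    ext x
    apply SSet.stdSimplex.objEquiv.injective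
    apply SimplexCategory.Hom.ext
    apply OrderHom.ext
    funext j
    exact Subsingleton.elim (α := Fin 1) _ _

/-- The `i`-th vertex of the standard simplex `Δ[n]`. -/
def vrt (n : ℕ) (i : Fin (n + 1)) : Δ[n].obj V0 :=
  SSet.stdSimplex.const n i V0

/-- The boundary `∂Δ[n]`, as a subcomplex of `Δ[n]`: the simplices which are not
surjective as monotone maps. -/
def bSub (n : ℕ) : Sub Δ[n] where
  carrier m := {σ | ¬Function.Surjective (SSet.stdSimplex.asOrderHom σ)}
  map_mem _ _ f σ hσ h := hσ (Function.Surjective.of_comp h)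

/-- The `k`-skeleton of `Y`, as a subcomplex: the simplices which factor through some
simplex of dimension at most `k`. -/
def skSub (Y : SSet.{0}) (k : ℕ) : Sub Y where
  carrier m := {σ | ∃ (j : ℕ) (_ : j ≤ k) (f : m.unop ⟶ SimplexCategory.mk j)
    (τ : Y.obj (Opposite.op (SimplexCategory.mk j))), Y.map f.op τ = σ}
  map_mem := by
    rintro m m' φ σ ⟨j, hj, f, τ, rfl⟩
    exact ⟨j, hj, φ.unop ≫ f, τ, by rw [← FunctorToTypes.map_comp_apply]; rfl⟩

/-- A `k`-simplex is nondegenerate if it admits no factorization through a simplex of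
strictly smaller dimension. -/
def Nondegenerate (Y : SSet.{0}) {k : ℕ} (σ : Y.obj (Opposite.op (SimplexCategory.mk k))) :
    Prop :=
  ∀ (j : ℕ) (f : SimplexCategory.mk k ⟶ SimplexCategory.mk j)
    (τ : Y.obj (Opposite.op (SimplexCategory.mk j))), Y.map f.op τ = σ → k ≤ j

/-- The iso-horn inclusion `𝕍_i[m+1] ↪ ∇̄_i[m+1]`: the boundary inclusion
`∂Δ[m] ↪ Δ[m]` widened at the single vertex `i`, i.e. the inclusion
`({0} × Δ[m]) ∪ W_i(∂Δ[m]) ↪ W_i(Δ[m])` of the iso-horn into the isoplex. -/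
def isoHornIncl (m : ℕ) (i : Fin (m + 1)) :
    (widenedSub Δ[m] (bSub m) {vrt m i}).toSSet ⟶ (wideSub Δ[m] {vrt m i}).toSSet :=
  widenedIncl Δ[m] (bSub m) {vrt m i}

/-- `IsoHorn`: the class of all iso-horn inclusions. -/
def IsoHorn : MorphismProperty SSet.{0} := fun _ _ h =>
  ∃ (m : ℕ) (i : Fin (m + 1)), Arrow.mk h = Arrow.mk (isoHornIncl m i)

/-! ## The classes `({0} ↪ J) □ Bdry` and `({0} ↪ J) □ Mono` -/

/-- The class `({0} ↪ J) □ Bdry` of pushout-products of the vertex `0 : Δ[0] ⟶ J`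
with the boundary inclusions `∂Δ[n] ↪ Δ[n]`. -/
def ppJ0Bdry : MorphismProperty SSet.{0} := fun _ _ h =>
  ∃ n : ℕ, Arrow.mk h = Arrow.mk (pp (ptJ false) (SSet.boundary n).ι)

/-- The class `({0} ↪ J) □ Mono` of pushout-products of the vertex `0 : Δ[0] ⟶ J`
with all monomorphisms of simplicial sets. -/
def ppJ0Mono : MorphismProperty SSet.{0} := fun _ _ h =>
  ∃ (W Z : SSet.{0}) (g : W ⟶ Z), Mono g ∧ Arrow.mk h = Arrow.mk (pp (ptJ false) g)


/-- The free-living isomorphism `𝕀`: the groupoid with two objects `0, 1` and exactly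
one morphism in each hom-set. -/
def FreeIso : Type := Bool

instance : Groupoid FreeIso where
  Hom _ _ := PUnit
  id _ := PUnit.unit
  comp _ _ := PUnit.unit
  inv _ := PUnit.unit

/-- The functor `[1] ⟶ [n+1]` (i.e. `Fin 2 ⥤ Fin (n+2)`) picking out the morphism
`i → i+1`. -/
def edgeFunctor (n : ℕ) (i : Fin (n + 1)) : Fin 2 ⥤ Fin (n + 2) :=
  Monotone.functor (f := fun j => if j = 0 then i.castSucc else i.succ)
    (by
      intro a b hab
      by_cases ha : a = 0
      · by_cases hb : b = 0
        · simp [ha, hb]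
        · simpa [ha, hb] using (Fin.castSucc_le_succ i)
      · have hb : b ≠ 0 := fun h => ha (le_antisymm (h ▸ hab) (Fin.zero_le a))
        simp [ha, hb])

/-- The inclusion `[1] ⟶ 𝕀` of the free-living arrow into the free-living isomorphism,
sending `0 ↦ 0` and `1 ↦ 1`. -/
def inclFunctor : Fin 2 ⥤ FreeIso where
  obj j := show Bool from decide (j = 1)
  map _ := PUnit.unit
  map_id _ := rfl
  map_comp _ _ := rfl

/-- `edgeFunctor`, as a morphism in `Cat`. -/
def edgeHom (n : ℕ) (i : Fin (n + 1)) : Cat.of (Fin 2) ⟶ Cat.of (Fin (n + 2)) :=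
  (edgeFunctor n i).toCatHom

/-- `inclFunctor`, as a morphism in `Cat`. -/
def inclHom : Cat.of (Fin 2) ⟶ Cat.of FreeIso :=
  inclFunctor.toCatHom

namespace Iso18

/-- Collapse `Fin (m+2) → Fin (m+1)`, identifying `i` and `i+1`. -/
def cl (m : ℕ) (i : Fin (m + 1)) (x : Fin (m + 2)) : Fin (m + 1) :=
  if h : x.val ≤ i.val then ⟨x.val, lt_of_le_of_lt h i.isLt⟩
  else ⟨x.val - 1, by have := x.isLt; omega⟩

/-- The embedding `Fin (m+1) → Fin (m+2)` avoiding `i+1`. -/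
def ph (m : ℕ) (i : Fin (m + 1)) (j : Fin (m + 1)) : Fin (m + 2) :=
  if j.val ≤ i.val then ⟨j.val, by have := j.isLt; omega⟩
  else ⟨j.val + 1, by have := j.isLt; omega⟩

variable (m : ℕ) (i : Fin (m + 1))

lemma cl_val (x : Fin (m + 2)) : (cl m i x).val = if x.val ≤ i.val then x.val else x.val - 1 := by
  unfold cl; split <;> rfl

lemma ph_val (j : Fin (m + 1)) : (ph m i j).val = if j.val ≤ i.val then j.val else j.val + 1 := by
  unfold ph; split <;> rfl

lemma cl_ph (j : Fin (m + 1)) : cl m i (ph m i j) = j := by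
  apply Fin.ext; rw [cl_val, ph_val]; split_ifs <;> omega

lemma ph_ne (j : Fin (m + 1)) : ph m i j ≠ i.succ := by
  intro h
  have := congrArg Fin.val h
  rw [ph_val] at this
  simp only [Fin.val_succ] at this
  split_ifs at this <;> omega

lemma ph_cl (x : Fin (m + 2)) (hx : x ≠ i.succ) : ph m i (cl m i x) = x := by
  have hx' : x.val ≠ i.val + 1 := fun h => hx (Fin.ext (by simpa using h))
  apply Fin.ext; rw [ph_val, cl_val]
  have := x.isLt
  split_ifs <;> omega

lemma cl_mono {x y : Fin (m + 2)} (h : x ≤ y) : (cl m i x).val ≤ (cl m i y).val := by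
  rw [cl_val, cl_val]
  have : x.val ≤ y.val := h
  split_ifs <;> omega

lemma cl_succ : cl m i i.succ = i := by
  apply Fin.ext; rw [cl_val]; simp

lemma cl_castSucc : cl m i i.castSucc = i := by
  apply Fin.ext; rw [cl_val]; simp

lemma back {x y : Fin (m + 2)} (h : (cl m i x).val ≤ (cl m i y).val) (h' : ¬ x ≤ y) :
    x = i.succ ∧ y = i.castSucc := by
  rw [cl_val, cl_val] at h
  have h'' : ¬ x.val ≤ y.val := h'
  have hx := x.isLt; have hy := y.isLt
  constructor <;> apply Fin.ext <;> simp only [Fin.val_succ, Fin.coe_castSucc] <;>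
    split_ifs at h <;> omega

/-- The category `[m+1]_i`: `Fin (m+2)` with the preorder collapsing `i ≅ i+1`. -/
def Ob (m : ℕ) (_i : Fin (m + 1)) : Type := Fin (m + 2)

instance : Preorder (Ob m i) where
  le a b := (cl m i a).val ≤ (cl m i b).val
  le_refl a := Nat.le_refl _
  le_trans _ _ _ hab hbc := Nat.le_trans hab hbc

lemma hom_eq {α : Type} [Preorder α] {a b : α} (f g : a ⟶ b) : f = g := by
  obtain ⟨⟨_⟩⟩ := f; obtain ⟨⟨_⟩⟩ := g; rfl

lemma functor_ext {A : Type} [Category A] {α : Type} [Preorder α] (F G : A ⥤ α)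
    (h : ∀ x, F.obj x = G.obj x) : F = G :=
  CategoryTheory.Functor.ext h (fun _ _ _ => hom_eq _ _)

/-- `Fin (m+2) → Ob m i`, the identity function. -/
abbrev toOb (a : Fin (m + 2)) : Ob m i := a

/-- `Ob m i → Fin (m+2)`, the identity function. -/
abbrev unOb (a : Ob m i) : Fin (m + 2) := a

lemma toOb_le {a b : Fin (m + 2)} (h : a ≤ b) : toOb m i a ≤ toOb m i b := cl_mono m i h

/-- The canonical functor `[m+1] ⥤ [m+1]_i`. -/
def gOne : Fin (m + 2) ⥤ Ob m i :=
  Monotone.functor (f := toOb m i) (fun _ _ h => toOb_le m i h)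

/-- `FreeIso → Bool`, the identity function. -/
abbrev unF (b : FreeIso) : Bool := b

/-- object part of `𝕀 ⥤ [m+1]_i`. -/
def obF (b : FreeIso) : Ob m i := toOb m i (if unF b = true then i.succ else i.castSucc)

lemma cl_obF (b : FreeIso) : cl m i (unOb m i (obF m i b)) = i := by
  show cl m i (if unF b = true then i.succ else i.castSucc) = i
  cases unF b <;> simp [cl_succ, cl_castSucc]

lemma obF_le (a b : FreeIso) : obF m i a ≤ obF m i b := by
  show (cl m i (obF m i a)).val ≤ (cl m i (obF m i b)).val
  rw [show cl m i (obF m i a) = i from cl_obF m i a, show cl m i (obF m i b) = i from cl_obF m i b]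

/-- The functor `𝕀 ⥤ [m+1]_i` sending `0 ↦ i`, `1 ↦ i+1`. -/
def gTwo : CategoryTheory.Functor.{0, 0, 0, 0} FreeIso (Ob m i) where
  obj := obF m i
  map {a b} _ := homOfLE (obF_le m i a b)
  map_id _ := hom_eq _ _
  map_comp _ _ := hom_eq _ _

lemma square' : edgeFunctor m i ⋙ gOne m i = inclFunctor ⋙ gTwo m i := by
  refine CategoryTheory.Functor.ext (fun j => ?_) (fun a b f => hom_eq _ _)
  fin_cases j <;> rfl

/-- The square commutes. -/
lemma square : edgeHom m i ≫ (show Cat.of (Fin (m + 2)) ⟶ Cat.of (Ob m i) from (gOne m i).toCatHom)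
    = inclHom ≫ (show Cat.of FreeIso ⟶ Cat.of (Ob m i) from (gTwo m i).toCatHom) :=
  congrArg Functor.toCatHom (square' m i)

end Iso18
namespace Iso18

variable (m : ℕ) (i : Fin (m + 1))

/-- The backward arrow `1 ⟶ 0` of `𝕀`. -/
def u10 : @Quiver.Hom FreeIso (@CategoryStruct.toQuiver _ (@Category.toCategoryStruct _
    (Groupoid.toCategory : Category.{0, 0} FreeIso)))
    (show FreeIso from true) (show FreeIso from false) := PUnit.unit

/-- The forward arrow `0 ⟶ 1` of `𝕀`. -/
def u01 : @Quiver.Hom FreeIso (@CategoryStruct.toQuiver _ (@Category.toCategoryStruct _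
    (Groupoid.toCategory : Category.{0, 0} FreeIso)))
    (show FreeIso from false) (show FreeIso from true) := PUnit.unit

lemma csle : i.castSucc ≤ i.succ := Fin.castSucc_le_succ i

/-- `homOfLE` in `Fin (m+2)`, with better elaboration behavior. -/
def fh {m : ℕ} {a b : Fin (m + 2)} (h : a ≤ b) : a ⟶ b := homOfLE h

/-- Any two morphisms in `Fin (m+2)` agree. -/
lemma fh_eq {m : ℕ} {a b : Fin (m + 2)} (f g : a ⟶ b) : f = g := hom_eq f g

/-- The morphism `i ⟶ i+1` in `[m+1]`. -/
def csh : @Quiver.Hom (Fin (m + 2)) (Preorder.smallCategory (Fin (m + 2))).toQuiver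
    i.castSucc i.succ := fh (csle m i)

/-- The morphism `0 ⟶ 1` in `[1]`. -/
def e01h : (0 : Fin 2) ⟶ (1 : Fin 2) := homOfLE (by decide)

lemma G1001 {D : Cat.{0, 0}} (G : FreeIso ⥤ D) {X : D}
    (h : G.obj (show FreeIso from false) ⟶ X) :
    G.map u01 ≫ G.map u10 ≫ h = h := by
  rw [← Category.assoc, ← G.map_comp, show u01 ≫ u10 = 𝟙 (show FreeIso from false) from rfl,
    G.map_id, Category.id_comp]

lemma G0110 {D : Cat.{0, 0}} (G : FreeIso ⥤ D) {X : D}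
    (h : G.obj (show FreeIso from true) ⟶ X) :
    G.map u10 ≫ G.map u01 ≫ h = h := by
  rw [← Category.assoc, ← G.map_comp, show u10 ≫ u01 = 𝟙 (show FreeIso from true) from rfl,
    G.map_id, Category.id_comp]

section Desc

variable {D : Cat.{0, 0}} (F : Fin (m + 2) ⥤ D) (G : FreeIso ⥤ D)
variable (w : edgeFunctor m i ⋙ F = inclFunctor ⋙ G)
include w

lemma e1 : F.obj i.succ = G.obj (show FreeIso from true) :=
  Functor.congr_obj w (1 : Fin 2)

lemma e2 : F.obj i.castSucc = G.obj (show FreeIso from false) :=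
  Functor.congr_obj w (0 : Fin 2)

/-- The inverse morphism `F(i+1) ⟶ F(i)` supplied by `G`. -/
def vinv : F.obj i.succ ⟶ F.obj i.castSucc :=
  eqToHom (e1 m i F G w) ≫ G.map u10 ≫ eqToHom (e2 m i F G w).symm

lemma eHom : F.map (csh m i) =
    eqToHom (e2 m i F G w) ≫ G.map u01 ≫ eqToHom (e1 m i F G w).symm := by
  have h2 := Functor.congr_hom w (e01h)
  exact (congrArg F.map (hom_eq (α := Fin (m + 2)) _ _)).trans h2

lemma ev : F.map (csh m i) ≫ vinv m i F G w = 𝟙 _ := by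
  rw [eHom m i F G w]; unfold vinv
  simp only [Category.assoc, eqToHom_trans, eqToHom_trans_assoc, eqToHom_refl,
    Category.id_comp, Category.comp_id, G1001 G]

lemma ve : vinv m i F G w ≫ F.map (csh m i) = 𝟙 _ := by
  rw [eHom m i F G w]; unfold vinv
  simp only [Category.assoc, eqToHom_trans, eqToHom_trans_assoc, eqToHom_refl,
    Category.id_comp, Category.comp_id, G0110 G]

lemma ev' {X : D} (h : F.obj i.castSucc ⟶ X) :
    F.map (csh m i) ≫ vinv m i F G w ≫ h = h := by
  rw [← Category.assoc, ev m i F G w, Category.id_comp]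

lemma ve' {X : D} (h : F.obj i.succ ⟶ X) :
    vinv m i F G w ≫ F.map (csh m i) ≫ h = h := by
  rw [← Category.assoc, ve m i F G w, Category.id_comp]

/-- The map part of the functor induced on `[m+1]_i`. -/
def dmap {a b : Ob m i} (f : a ⟶ b) : F.obj (unOb m i a) ⟶ F.obj (unOb m i b) :=
  if h : unOb m i a ≤ unOb m i b then F.map (fh h)
  else
    eqToHom (congrArg F.obj (back m i (leOfHom f) h).1) ≫ vinv m i F G w ≫
      eqToHom (congrArg F.obj (back m i (leOfHom f) h).2.symm)

lemma dmap_pos {a b : Ob m i} (f : a ⟶ b) (h : unOb m i a ≤ unOb m i b) :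
    dmap m i F G w f = F.map (fh h) := dif_pos h

lemma dmap_neg {a b : Ob m i} (f : a ⟶ b) (h : ¬ unOb m i a ≤ unOb m i b) :
    dmap m i F G w f =
      eqToHom (congrArg F.obj (back m i (leOfHom f) h).1) ≫ vinv m i F G w ≫
        eqToHom (congrArg F.obj (back m i (leOfHom f) h).2.symm) := dif_neg h

lemma dmap_id (a : Ob m i) : dmap m i F G w (𝟙 a) = 𝟙 (F.obj (unOb m i a)) := by
  rw [dmap_pos m i F G w _ (le_refl _)]
  rw [show fh (le_refl (unOb m i a)) = 𝟙 _ from fh_eq _ _, F.map_id]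

lemma dmap_comp {a b c : Ob m i} (f : a ⟶ b) (g : b ⟶ c) :
    dmap m i F G w (f ≫ g) = dmap m i F G w f ≫ dmap m i F G w g := by
    by_cases h1 : unOb m i a ≤ unOb m i b
    · by_cases h2 : unOb m i b ≤ unOb m i c
      · rw [dmap_pos m i F G w _ (le_trans h1 h2), dmap_pos m i F G w f h1,
          dmap_pos m i F G w g h2, ← F.map_comp]
        exact congrArg F.map (hom_eq _ _)
      · obtain ⟨hb, hc⟩ := back m i (leOfHom g) h2
        have hb' : b = toOb m i i.succ := hb
        have hc' : c = toOb m i i.castSucc := hc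
        subst hb'; subst hc'
        rw [dmap_pos m i F G w f h1, dmap_neg m i F G w g h2]
        by_cases h3 : unOb m i a ≤ unOb m i (toOb m i i.castSucc)
        · rw [dmap_pos m i F G w _ h3]
          rw [show fh h1 = fh h3 ≫ csh m i from fh_eq _ _, F.map_comp]
          simp only [eqToHom_refl, Category.comp_id, Category.id_comp, Category.assoc,
            ev m i F G w, ev' m i F G w]
        · rw [dmap_neg m i F G w _ h3]
          obtain ⟨ha, _⟩ := back m i (leOfHom (f ≫ g)) h3
          have ha' : a = toOb m i i.succ := ha
          subst ha'
          rw [show fh h1 = 𝟙 _ from fh_eq _ _, F.map_id]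
          simp only [eqToHom_refl, Category.comp_id, Category.id_comp]
    · obtain ⟨ha, hb⟩ := back m i (leOfHom f) h1
      have ha' : a = toOb m i i.succ := ha
      have hb' : b = toOb m i i.castSucc := hb
      subst ha'; subst hb'
      rw [dmap_neg m i F G w f h1]
      by_cases h2 : unOb m i (toOb m i i.castSucc) ≤ unOb m i c
      · rw [dmap_pos m i F G w g h2]
        by_cases h3 : unOb m i (toOb m i i.succ) ≤ unOb m i c
        · rw [dmap_pos m i F G w _ h3]
          rw [show fh h2 = csh m i ≫ fh h3 from fh_eq _ _, F.map_comp]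
          simp only [eqToHom_refl, Category.comp_id, Category.id_comp, Category.assoc,
            ve m i F G w, ve' m i F G w]
        · rw [dmap_neg m i F G w _ h3]
          obtain ⟨_, hc⟩ := back m i (leOfHom (f ≫ g)) h3
          have hc' : c = toOb m i i.castSucc := hc
          subst hc'
          rw [show fh h2 = 𝟙 _ from fh_eq _ _, F.map_id]
          simp only [eqToHom_refl, Category.comp_id, Category.id_comp]
      · obtain ⟨hb2, _⟩ := back m i (leOfHom g) h2
        exfalso
        have h5 : (i.castSucc : Fin (m + 2)).val = (i.succ : Fin (m + 2)).val :=
          congrArg Fin.val hb2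
        simp at h5

/-- The functor `[m+1]_i ⥤ D` induced by `F` and `G`. -/
def desc : Ob m i ⥤ D where
  obj a := F.obj (unOb m i a)
  map f := dmap m i F G w f
  map_id a := dmap_id m i F G w a
  map_comp f g := dmap_comp m i F G w f g

end Desc

end Iso18
namespace Iso18

variable (m : ℕ) (i : Fin (m + 1))

instance : Preorder ↑(Cat.of (Ob m i)) := inferInstanceAs (Preorder (Ob m i))

section Fac

variable {D : Cat.{0, 0}} (F : Fin (m + 2) ⥤ D) (G : FreeIso ⥤ D)
variable (w : edgeFunctor m i ⋙ F = inclFunctor ⋙ G)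
include w

lemma fac_left : gOne m i ⋙ desc m i F G w = F := by
  refine CategoryTheory.Functor.ext (fun a => rfl) (fun a b f => ?_)
  show dmap m i F G w ((gOne m i).map f) = 𝟙 _ ≫ F.map f ≫ 𝟙 _
  rw [Category.id_comp, Category.comp_id]
  show dmap m i F G w ((gOne m i).map f) = F.map f
  exact (dmap_pos m i F G w ((gOne m i).map f) (leOfHom f)).trans (congrArg F.map (fh_eq _ _))

lemma fac_right : gTwo m i ⋙ desc m i F G w = G := by
  refine CategoryTheory.Functor.ext (fun b => ?_) (fun a b f => ?_)
  · cases b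
    · exact e2 m i F G w
    · exact e1 m i F G w
  · show dmap m i F G w ((gTwo m i).map f) = _
    cases a <;> cases b
    · -- false ⟶ false
      rw [dmap_pos m i F G w _ (le_refl _), show fh (le_refl _) = 𝟙 _ from fh_eq _ _, F.map_id]
      rw [show G.map f = 𝟙 _ from G.map_id _, Category.id_comp]
      rw [eqToHom_trans]
      exact (eqToHom_refl _ _).symm
    · -- false ⟶ true
      rw [show (gTwo m i).map f = (gOne m i).map (csh m i) from hom_eq _ _]
      show dmap m i F G w ((gOne m i).map (csh m i)) = _
      rw [dmap_pos m i F G w ((gOne m i).map (csh m i)) (leOfHom (csh m i))]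
      exact (congrArg F.map (fh_eq _ (csh m i))).trans (eHom m i F G w)
    · -- true ⟶ false
      have hne : ¬ unOb m i (obF m i true) ≤ unOb m i (obF m i false) := by
        show ¬ (i.succ : Fin (m + 2)) ≤ i.castSucc
        simp [Fin.le_def]
      rw [dmap_neg m i F G w ((gTwo m i).map f) hne]
      unfold vinv
      rw [show f = u10 from rfl]
      simp only [eqToHom_refl, Category.comp_id, Category.id_comp, Category.assoc,
        eqToHom_trans, eqToHom_trans_assoc]
      rfl
    · -- true ⟶ true
      rw [dmap_pos m i F G w _ (le_refl _), show fh (le_refl _) = 𝟙 _ from fh_eq _ _, F.map_id]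
      rw [show G.map f = 𝟙 _ from G.map_id _, Category.id_comp]
      rw [eqToHom_trans]
      exact (eqToHom_refl _ _).symm

lemma desc_uniq (H : Ob m i ⥤ D) (hl : gOne m i ⋙ H = F) (hr : gTwo m i ⋙ H = G) :
    H = desc m i F (G := G) w := by
  have hobj : ∀ a : Ob m i, H.obj a = F.obj (unOb m i a) := fun a =>
    Functor.congr_obj hl (unOb m i a)
  refine CategoryTheory.Functor.ext hobj (fun a b f => ?_)
  by_cases h : unOb m i a ≤ unOb m i b
  · have hf : f = (gOne m i).map (fh h) := hom_eq _ _
    rw [hf]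
    have := Functor.congr_hom hl (fh h)
    rw [show (gOne m i ⋙ H).map (fh h) = H.map ((gOne m i).map (fh h)) from rfl] at this
    erw [this]
    show _ = eqToHom _ ≫ dmap m i F G w ((gOne m i).map (fh h)) ≫ eqToHom _
    rw [dmap_pos m i F G w ((gOne m i).map (fh h)) (leOfHom (fh h))]
    rfl
  · obtain ⟨ha, hb⟩ := back m i (leOfHom f) h
    have ha' : a = toOb m i i.succ := ha
    have hb' : b = toOb m i i.castSucc := hb
    subst ha'; subst hb'
    have hf : f = (gTwo m i).map u10 := hom_eq _ _
    rw [hf]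
    have := Functor.congr_hom hr u10
    rw [show (gTwo m i ⋙ H).map u10 = H.map ((gTwo m i).map u10) from rfl] at this
    erw [this]
    show _ = eqToHom _ ≫ dmap m i F G w ((gTwo m i).map u10) ≫ eqToHom _
    rw [dmap_neg m i F G w ((gTwo m i).map u10) h]
    unfold vinv
    simp only [eqToHom_refl, Category.comp_id, Category.id_comp, Category.assoc,
      eqToHom_trans, eqToHom_trans_assoc]
    refine Eq.trans ?_ (eqToHom_trans_assoc _ _ _).symm
    refine Eq.trans ?_ (congrArg (fun k => eqToHom _ ≫ G.map u10 ≫ k) (eqToHom_trans _ _).symm)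
    rfl

end Fac

/-- The pushout cocone with apex `[m+1]_i`. -/
noncomputable def cocone : PushoutCocone (edgeHom m i) inclHom :=
  PushoutCocone.mk (show Cat.of (Fin (m + 2)) ⟶ Cat.of (Ob m i) from (gOne m i).toCatHom)
    (show Cat.of FreeIso ⟶ Cat.of (Ob m i) from (gTwo m i).toCatHom) (square m i)

/-- The cocone is a colimit. -/
noncomputable def coconeIsColimit : Limits.IsColimit (cocone m i) := by
  refine PushoutCocone.IsColimit.mk (square m i)
    (fun s => (desc m i s.inl.toFunctor s.inr.toFunctor
      (congrArg Cat.Hom.toFunctor s.condition)).toCatHom)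
    (fun s => congrArg Functor.toCatHom (fac_left m i s.inl.toFunctor s.inr.toFunctor
      (congrArg Cat.Hom.toFunctor s.condition)))
    (fun s => congrArg Functor.toCatHom (fac_right m i s.inl.toFunctor s.inr.toFunctor
      (congrArg Cat.Hom.toFunctor s.condition)))
    (fun s H hl hr => congrArg Functor.toCatHom (desc_uniq m i s.inl.toFunctor s.inr.toFunctor
      (congrArg Cat.Hom.toFunctor s.condition) H.toFunctor (congrArg Cat.Hom.toFunctor hl)
      (congrArg Cat.Hom.toFunctor hr)))

lemma isPushout : IsPushout (edgeHom m i) inclHom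
    (show Cat.of (Fin (m + 2)) ⟶ Cat.of (Ob m i) from (gOne m i).toCatHom)
    (show Cat.of FreeIso ⟶ Cat.of (Ob m i) from (gTwo m i).toCatHom) :=
  IsPushout.of_isColimit (coconeIsColimit m i)

end Iso18
namespace Iso18

variable (m : ℕ) (i : Fin (m + 1))

lemma eq_vrt (α : Δ[m].obj V0) (h : SSet.stdSimplex.asOrderHom α 0 = i) : α = vrt m i := by
  apply SSet.stdSimplex.objEquiv.injective
  apply SimplexCategory.Hom.ext
  apply OrderHom.ext
  funext j
  rw [Fin.eq_zero j]
  exact h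

lemma mem_iff {nn : SimplexCategoryᵒᵖ} (σ : (sprod J Δ[m]).obj nn) :
    σ ∈ (wideSub Δ[m] {vrt m i}).carrier nn ↔
      ∀ j : Fin (nn.unop.len + 1), σ.1 j = true → SSet.stdSimplex.asOrderHom σ.2 j = i := by
  constructor
  · intro h j hj
    have h3 : Δ[m].map (SimplexCategory.const ⦋0⦌ nn.unop j).op σ.2 = vrt m i :=
      h (SimplexCategory.const ⦋0⦌ nn.unop j) hj
    exact congrArg (fun α => SSet.stdSimplex.asOrderHom α 0) h3
  · intro h g hg
    show Δ[m].map g.op σ.2 = vrt m i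
    exact eq_vrt m i _ (h (g.toOrderHom 0) hg)

/-- The vertex function of the simplex of the nerve associated to a simplex of the
isoplex. -/
def uu {nn : SimplexCategoryᵒᵖ} (σ : (sprod J Δ[m]).obj nn) (j : Fin (nn.unop.len + 1)) :
    Ob m i :=
  toOb m i (if σ.1 j = true then i.succ else ph m i (SSet.stdSimplex.asOrderHom σ.2 j))

lemma cl_uu {nn : SimplexCategoryᵒᵖ} (σ : (sprod J Δ[m]).obj nn)
    (hσ : σ ∈ (wideSub Δ[m] {vrt m i}).carrier nn) (j : Fin (nn.unop.len + 1)) :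
    cl m i (unOb m i (uu m i σ j)) = SSet.stdSimplex.asOrderHom σ.2 j := by
  show cl m i (if σ.1 j = true then i.succ else ph m i (SSet.stdSimplex.asOrderHom σ.2 j)) =
    SSet.stdSimplex.asOrderHom σ.2 j
  by_cases h : σ.1 j = true
  · rw [if_pos h, cl_succ, ((mem_iff m i σ).mp hσ j h)]
  · rw [if_neg h, cl_ph]

lemma uu_mono {nn : SimplexCategoryᵒᵖ} (σ : (sprod J Δ[m]).obj nn)
    (hσ : σ ∈ (wideSub Δ[m] {vrt m i}).carrier nn) : Monotone (uu m i σ) := by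
  intro j k hjk
  show (cl m i (unOb m i (uu m i σ j))).val ≤ (cl m i (unOb m i (uu m i σ k))).val
  rw [cl_uu m i σ hσ j, cl_uu m i σ hσ k]
  exact (SSet.stdSimplex.asOrderHom σ.2).monotone hjk

/-- Forward map: isoplex simplex to nerve simplex. -/
def toN {nn : SimplexCategoryᵒᵖ} (σ : (wideSub Δ[m] {vrt m i}).toSSet.obj nn) :
    (nerve (Ob m i)).obj nn :=
  Monotone.functor (f := uu m i σ.1) (uu_mono m i σ.1 σ.2)

lemma fromN_mono {nn : SimplexCategoryᵒᵖ} (Fc : (nerve (Ob m i)).obj nn) :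
    Monotone (fun j => cl m i (unOb m i (Fc.obj j))) := by
  intro j k hjk
  exact leOfHom (Fc.map (homOfLE hjk))

/-- Backward map: nerve simplex to isoplex simplex. -/
def fromN {nn : SimplexCategoryᵒᵖ} (Fc : (nerve (Ob m i)).obj nn) :
    (wideSub Δ[m] {vrt m i}).toSSet.obj nn :=
  ⟨(fun j => decide (unOb m i (Fc.obj j) = i.succ),
    SSet.stdSimplex.objMk ⟨fun j => cl m i (unOb m i (Fc.obj j)), fromN_mono m i Fc⟩),
   by
    refine (mem_iff m i _).mpr (fun j hj => ?_)
    have h5 : unOb m i (Fc.obj j) = i.succ := of_decide_eq_true hj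
    show cl m i (unOb m i (Fc.obj j)) = i
    rw [h5, cl_succ]⟩

/-- The level-wise equivalence. -/
def nEquiv (nn : SimplexCategoryᵒᵖ) :
    ((wideSub Δ[m] {vrt m i}).toSSet.obj nn) ≃ ((nerve (Ob m i)).obj nn) where
  toFun := toN m i
  invFun := fromN m i
  left_inv σ := by
    apply Subtype.ext
    apply Prod.ext
    · funext j
      show decide (unOb m i (uu m i σ.1 j) = i.succ) = σ.1.1 j
      by_cases h : σ.1.1 j = true
      · rw [h]
        apply decide_eq_true
        show (if σ.1.1 j = true then i.succ else ph m i (SSet.stdSimplex.asOrderHom σ.1.2 j)) = i.succ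
        rw [if_pos h]
      · rw [Bool.not_eq_true] at h
        rw [h]
        apply decide_eq_false
        show ¬ (if σ.1.1 j = true then i.succ else ph m i (SSet.stdSimplex.asOrderHom σ.1.2 j)) = i.succ
        rw [if_neg (by rw [h]; exact Bool.false_ne_true)]
        exact ph_ne m i _
    · apply SSet.stdSimplex.objEquiv.injective
      apply SimplexCategory.Hom.ext
      apply OrderHom.ext
      funext j
      show cl m i (unOb m i (uu m i σ.1 j)) = SSet.stdSimplex.asOrderHom σ.1.2 j
      exact cl_uu m i σ.1 σ.2 j
  right_inv Fc := by
    apply functor_ext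
    intro j
    show uu m i (fromN m i Fc).1 j = Fc.obj j
    by_cases h : unOb m i (Fc.obj j) = i.succ
    · show (if (fromN m i Fc).1.1 j = true then toOb m i i.succ
        else toOb m i (ph m i (SSet.stdSimplex.asOrderHom (fromN m i Fc).1.2 j))) = Fc.obj j
      have hc : (fromN m i Fc).1.1 j = true := decide_eq_true h
      rw [if_pos hc]
      exact congrArg (toOb m i) h.symm
    · show (if (fromN m i Fc).1.1 j = true then toOb m i i.succ
        else toOb m i (ph m i (SSet.stdSimplex.asOrderHom (fromN m i Fc).1.2 j))) = Fc.obj j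
      have hc : ¬ ((fromN m i Fc).1.1 j = true) := by
        show ¬ (decide (unOb m i (Fc.obj j) = i.succ) = true)
        simp [h]
      rw [if_neg hc]
      exact congrArg (toOb m i) (ph_cl m i _ h)

/-- The isomorphism between the isoplex and the nerve of `[m+1]_i`. -/
noncomputable def nerveIso : (wideSub Δ[m] {vrt m i}).toSSet ≅ nerve (Ob m i) :=
  NatIso.ofComponents (fun nn => Equiv.toIso (nEquiv m i nn)) (by
    intro nn nn' f
    refine ConcreteCategory.hom_ext _ _ (fun σ => ?_)
    show toN m i ((wideSub Δ[m] {vrt m i}).toSSet.map f σ) = (nerve (Ob m i)).map f (toN m i σ)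
    apply functor_ext
    intro j
    rfl)

end Iso18
/-- For `n = m + 1 ≥ 1` and `0 ≤ i ≤ n − 1`, the isoplex
`∇̄_i[n] = W_i(Δ[n−1])` is isomorphic to the nerve of the category `[n]_i` obtained from
`[n] = {0 ≤ … ≤ n}` by freely inverting `i → i+1`: that is, there is a pushout square in
`Cat` of `[n] ← [1] → 𝕀` (where `[1] → [n]` picks out `i → i+1` and `[1] → 𝕀` is the
inclusion into the free-living isomorphism) whose pushout `C` has `nerve C` isomorphic
to the isoplex. -/
theorem isoplex_iso_nerve_pushout (m : ℕ) (i : Fin (m + 1)) :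
    ∃ (C : Cat.{0, 0}) (g₁ : Cat.of (Fin (m + 2)) ⟶ C) (g₂ : Cat.of FreeIso ⟶ C),
      IsPushout (edgeHom m i) inclHom g₁ g₂ ∧
      Nonempty ((wideSub Δ[m] {vrt m i}).toSSet ≅ nerve C) :=
  ⟨Cat.of (Iso18.Ob m i), (Iso18.gOne m i).toCatHom, (Iso18.gTwo m i).toCatHom, Iso18.isPushout m i,
    ⟨Iso18.nerveIso m i⟩⟩

end Paper
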